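/- Given any integers W(1), …, W(N) with Σ_i W(i) = 0, there exists a cyclic sequence of adjacent-transposition moves of N labeled particles on ℤ_N, starting and ending at the same configuration, such that each particle i has winding number W(i). -/

import Mathlib

namespace Stmt12

def Adm (N : ℕ) (u : Fin N → ℤ) : Prop :=
  Function.Bijective (fun i : Fin N => ((u i : ℤ) : ZMod N))

def Move (N : ℕ) (u v : Fin N → ℤ) : Prop :=
  ∃ a b : Fin N, a ≠ b ∧
    ((u b : ℤ) : ZMod N) = ((u a : ℤ) : ZMod N) + 1 ∧
    v a = u a + 1 ∧ v b = u b - 1 ∧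
    ∀ c : Fin N, c ≠ a → c ≠ b → v c = u c

def Reach (N T : ℕ) (u v : Fin N → ℤ) : Prop :=
  ∃ z : ℕ → Fin N → ℤ, z 0 = u ∧ z T = v ∧ (∀ t ≤ T, Adm N (z t)) ∧
    ∀ t < T, Move N (z t) (z (t + 1))

theorem move_adm {N : ℕ} {u v : Fin N → ℤ} (hu : Adm N u) (hm : Move N u v) : Adm N v := by
  obtain ⟨a, b, hab, hb, ha', hb', hoth⟩ := hm
  have : (fun i : Fin N => ((v i : ℤ) : ZMod N)) =
      (fun i : Fin N => ((u i : ℤ) : ZMod N)) ∘ (Equiv.swap a b) := by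
    funext c
    rcases eq_or_ne c a with rfl | hca
    · simp [ha', hb, Equiv.swap_apply_left]
    rcases eq_or_ne c b with rfl | hcb
    · simp [hb', hb, Equiv.swap_apply_right]
    · simp [hoth c hca hcb, Equiv.swap_apply_of_ne_of_ne hca hcb]
  unfold Adm
  rw [this]
  exact hu.comp (Equiv.swap a b).bijective

theorem Reach.refl {N : ℕ} {u : Fin N → ℤ} (hu : Adm N u) : Reach N 0 u u :=
  ⟨fun _ => u, rfl, rfl, fun _ _ => hu, fun t ht => absurd ht (Nat.not_lt_zero t)⟩

theorem Reach.step {N T : ℕ} {u v w : Fin N → ℤ} (h : Reach N T u v) (hm : Move N v w) :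
    Reach N (T + 1) u w := by
  obtain ⟨z, h0, hT, hadm, hmv⟩ := h
  refine ⟨fun t => if t ≤ T then z t else w, by simp [h0], by simp, ?_, ?_⟩
  · intro t ht
    by_cases htT : t ≤ T
    · simpa [htT] using hadm t htT
    · have : Adm N w := move_adm (hT ▸ hadm T le_rfl) hm
      simpa [htT] using this
  · intro t ht
    rcases Nat.lt_or_ge t T with h1 | h1
    · have : t + 1 ≤ T := h1
      simpa [Nat.le_of_lt h1, this] using hmv t h1
    · have hteq : t = T := le_antisymm (Nat.lt_succ_iff.mp ht) h1
      subst hteq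
      simpa [hT] using hm

theorem Reach.trans {N T S : ℕ} {u v w : Fin N → ℤ} (h1 : Reach N T u v)
    (h2 : Reach N S v w) : Reach N (T + S) u w := by
  obtain ⟨z1, h10, h1T, h1a, h1m⟩ := h1
  obtain ⟨z2, h20, h2S, h2a, h2m⟩ := h2
  refine ⟨fun t => if t < T then z1 t else z2 (t - T), ?_, ?_, ?_, ?_⟩
  · by_cases h : 0 < T
    · simpa [h] using h10
    · have : T = 0 := by omega
      subst this
      simpa using h20.trans h1T.symm |>.trans h10
  · have : ¬ T + S < T := by omega
    simp only [this, if_false]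
    simpa using h2S
  · intro t ht
    by_cases h : t < T
    · simpa [h] using h1a t (le_of_lt h)
    · simp only [h, if_false]
      exact h2a (t - T) (by omega)
  · intro t ht
    rcases Nat.lt_or_ge (t + 1) T with hc | hc
    · have h' : t < T := by omega
      simpa [h', hc] using h1m t h'
    rcases Nat.lt_or_ge t T with hc2 | hc2
    · have hteq : t + 1 = T := by omega
      have : z2 (t + 1 - T) = z1 (t + 1) := by
        rw [hteq]; simp [h20, h1T.symm, hteq]
      simp only [hc2, if_pos, show ¬ t + 1 < T by omega, if_false, this]
      exact h1m t hc2
    · have : ¬ t < T := by omega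
      simp only [this, show ¬ t + 1 < T by omega, if_false]
      have : t + 1 - T = (t - T) + 1 := by omega
      rw [this]
      exact h2m (t - T) (by omega)

theorem Reach.adm_right {N T : ℕ} {u v : Fin N → ℤ} (h : Reach N T u v) : Adm N v := by
  obtain ⟨z, _, hT, ha, _⟩ := h
  exact hT ▸ ha T le_rfl

theorem Reach.congr {N T T' : ℕ} {u v v' : Fin N → ℤ} (h : Reach N T u v) (hT : T = T')
    (hv : ∀ c, v c = v' c) : Reach N T' u v' := by
  subst hT
  have : v = v' := funext hv
  exact this ▸ h

theorem loop_aux {N : ℕ} (hN : 0 < N) {u : Fin N → ℤ} (hu : Adm N u) (a : Fin N) :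
    ∀ k : ℕ, k ≤ N - 1 →
    Reach N k u (fun c => if c = a then u a + (k : ℤ) else
      if (u c - u a) % (N : ℤ) ≤ (k : ℤ) then u c - 1 else u c) := by
  haveI : NeZero N := ⟨hN.ne'⟩
  have hminj : ∀ c d : Fin N, (u c - u a) % (N : ℤ) = (u d - u a) % (N : ℤ) → c = d := by
    intro c d h
    have h1 : u c - u a ≡ u d - u a [ZMOD (N : ℤ)] := h
    have h2 : u c ≡ u d [ZMOD (N : ℤ)] := by
      have := h1.add_right (u a); simpa using this
    exact hu.1 ((ZMod.intCast_eq_intCast_iff _ _ _).mpr h2)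
  have hmpos : ∀ c : Fin N, c ≠ a → 1 ≤ (u c - u a) % (N : ℤ) := by
    intro c hca
    have h0 : 0 ≤ (u c - u a) % (N : ℤ) :=
      Int.emod_nonneg _ (by exact_mod_cast hN.ne')
    rcases h0.lt_or_eq with h | h
    · exact h
    · exact absurd (hminj c a (by rw [sub_self, Int.zero_emod, ← h])) hca
  intro k
  induction k with
  | zero =>
    intro _
    have he : (fun c => if c = a then u a + ((0 : ℕ) : ℤ) else
        if (u c - u a) % (N : ℤ) ≤ ((0 : ℕ) : ℤ) then u c - 1 else u c) = u := by
      funext c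
      rcases eq_or_ne c a with rfl | hca
      · simp
      · rw [if_neg hca, if_neg (by have := hmpos c hca; push_cast; omega)]
    rw [he]
    exact Reach.refl hu
  | succ k ih =>
    intro hk1
    have hkN : k + 1 < N := by omega
    obtain ⟨b, hbdef⟩ := hu.2 (((u a : ℤ) : ZMod N) + ((k + 1 : ℕ) : ZMod N))
    simp only at hbdef
    have hbne : b ≠ a := by
      rintro rfl
      rw [left_eq_add] at hbdef
      have := Nat.le_of_dvd (by omega) ((ZMod.natCast_eq_zero_iff (k + 1) N).mp hbdef)
      omega
    have hbm : (u b - u a) % (N : ℤ) = (k : ℤ) + 1 := by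
      have hmod : u b ≡ u a + ((k : ℤ) + 1) [ZMOD (N : ℤ)] := by
        apply (ZMod.intCast_eq_intCast_iff _ _ _).mp
        push_cast
        push_cast at hbdef
        rw [hbdef]
      have h2 : u b - u a ≡ (k : ℤ) + 1 [ZMOD (N : ℤ)] := by
        have := hmod.sub_right (u a); simpa using this
      have h3 : (u b - u a) % (N : ℤ) = ((k : ℤ) + 1) % (N : ℤ) := h2
      rw [h3, Int.emod_eq_of_lt (by positivity) (by exact_mod_cast hkN)]
    refine (ih (by omega)).step ⟨a, b, hbne.symm, ?_, ?_, ?_, ?_⟩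
    · simp only [if_neg hbne, if_neg (show ¬ (u b - u a) % (N : ℤ) ≤ (k : ℤ) by
        rw [hbm]; omega), if_pos rfl]
      push_cast
      push_cast at hbdef
      rw [hbdef]; ring
    · simp only [if_pos rfl]
      push_cast; ring
    · simp only [if_neg hbne,
        if_pos (show (u b - u a) % (N : ℤ) ≤ ((k + 1 : ℕ) : ℤ) by rw [hbm]; push_cast; omega),
        if_neg (show ¬ (u b - u a) % (N : ℤ) ≤ (k : ℤ) by rw [hbm]; omega)]
    · intro c hca hcb
      simp only [if_neg hca]
      have hne : (u c - u a) % (N : ℤ) ≠ (k : ℤ) + 1 := fun h =>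
        hcb (hminj c b (by rw [h, hbm]))
      by_cases h : (u c - u a) % (N : ℤ) ≤ (k : ℤ)
      · rw [if_pos (by push_cast; omega), if_pos h]
      · rw [if_neg (by push_cast; omega), if_neg h]

theorem loop {N : ℕ} (hN : 0 < N) {u : Fin N → ℤ} (hu : Adm N u) (a : Fin N) :
    Reach N (N - 1) u (fun c => if c = a then u a + (N : ℤ) - 1 else u c - 1) := by
  haveI : NeZero N := ⟨hN.ne'⟩
  refine (loop_aux hN hu a (N - 1) le_rfl).congr rfl ?_
  intro c
  rcases eq_or_ne c a with rfl | hca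
  · rw [if_pos rfl, if_pos rfl, Nat.cast_sub hN, Nat.cast_one]
    ring
  · rw [if_neg hca, if_neg hca,
      if_pos (by
        have := Int.emod_lt_of_pos (u c - u a) (show (0 : ℤ) < N by exact_mod_cast hN)
        rw [Nat.cast_sub hN, Nat.cast_one]
        omega)]

theorem reach_list {N : ℕ} (hN : 0 < N) (L : List (Fin N)) :
    ∀ u : Fin N → ℤ, Adm N u →
      Reach N (L.length * (N - 1)) u
        (fun c => u c + (N : ℤ) * L.count c - L.length) := by
  induction L with
  | nil =>
    intro u hu
    refine (Reach.refl hu).congr (by simp) ?_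
    intro c; simp
  | cons a L ih =>
    intro u hu
    have h1 := loop hN hu a
    have h3 := h1.trans (ih _ h1.adm_right)
    refine h3.congr (by simp [List.length_cons]; ring) ?_
    intro c
    rcases eq_or_ne c a with rfl | hca
    · simp only [if_pos rfl, List.count_cons_self, List.length_cons]
      push_cast; ring
    · simp only [if_neg hca, List.length_cons,
        List.count_cons_of_ne hca.symm]
      push_cast
      ring

end Stmt12



/-- any integer winding numbers summing to zero are realized by
some cyclic sequence of adjacent exchanges of `N` labeled particles on `ℤ_N`. -/
theorem stmt_12 (N : ℕ) (hN : 0 < N) (W : Fin N → ℤ) (hsum : ∑ i, W i = 0) :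
    ∃ (T : ℕ) (z : Fin (T + 1) → Fin N → ℤ),
      (∀ i : Fin N, z 0 i = (i : ℤ)) ∧
      (∀ t, Function.Bijective (fun i : Fin N => ((z t i : ℤ) : ZMod N))) ∧
      (∀ t : Fin T, ∃ a b : Fin N, a ≠ b ∧
        ((z t.castSucc b : ℤ) : ZMod N) = ((z t.castSucc a : ℤ) : ZMod N) + 1 ∧
        z t.succ a = z t.castSucc a + 1 ∧
        z t.succ b = z t.castSucc b - 1 ∧
        ∀ c : Fin N, c ≠ a → c ≠ b → z t.succ c = z t.castSucc c) ∧
      (∀ i, z (Fin.last T) i = z 0 i + (N : ℤ) * W i) := by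
    classical
  haveI : NeZero N := ⟨hN.ne'⟩
  set m : ℕ := ∑ j, (W j).natAbs with hm
  have hle : ∀ i, (W i).natAbs ≤ m := by
    intro i
    rw [hm]
    exact Finset.single_le_sum (f := fun j => (W j).natAbs)
      (fun j _ => Nat.zero_le _) (Finset.mem_univ i)
  have hWm : ∀ i, 0 ≤ W i + (m : ℤ) := by
    intro i; have := hle i; omega
  set L : List (Fin N) := (List.finRange N).flatMap
    (fun i => List.replicate (W i + (m : ℤ)).toNat i) with hL
  have hcount : ∀ c : Fin N, ((L.count c : ℕ) : ℤ) = W c + (m : ℤ) := by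
    intro c
    have h1 : L.count c = (W c + (m : ℤ)).toNat := by
      rw [hL, List.count_flatMap]
      rw [← Fin.sum_univ_def]
      simp only [Function.comp, List.count_replicate, beq_iff_eq]
      rw [Finset.sum_ite_eq' Finset.univ c (fun i => (W i + (m : ℤ)).toNat)]
      simp
    rw [h1, Int.toNat_of_nonneg (hWm c)]
  have hlen : ((L.length : ℕ) : ℤ) = (N : ℤ) * m := by
    have h1 : L.length = ∑ i, (W i + (m : ℤ)).toNat := by
      rw [hL, List.length_flatMap, ← Fin.sum_univ_def]
      simp
    rw [h1]
    push_cast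
    have h2 : ∀ i ∈ Finset.univ, ((W i + (m : ℤ)).toNat : ℤ) = W i + (m : ℤ) :=
      fun i _ => Int.toNat_of_nonneg (hWm i)
    rw [Finset.sum_congr rfl h2, Finset.sum_add_distrib, hsum, zero_add,
      Finset.sum_const, Finset.card_univ, Fintype.card_fin, nsmul_eq_mul]
  have hadm0 : Stmt12.Adm N (fun i : Fin N => ((i : ℕ) : ℤ)) := by
    rw [Stmt12.Adm, Fintype.bijective_iff_injective_and_card]
    constructor
    · intro i j hij
      simp only at hij
      have h1 : ((i : ℕ) : ZMod N) = ((j : ℕ) : ZMod N) := by exact_mod_cast hij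
      apply Fin.ext
      rw [← ZMod.val_cast_of_lt i.isLt, ← ZMod.val_cast_of_lt j.isLt, h1]
    · simp [ZMod.card]
  obtain ⟨zn, hz0, hzT, hzadm, hzmv⟩ := Stmt12.reach_list hN L _ hadm0
  refine ⟨L.length * (N - 1), fun t => zn t.val, ?_, ?_, ?_, ?_⟩
  · intro i
    show zn ((0 : Fin (L.length * (N - 1) + 1)) : ℕ) i = (i : ℤ)
    rw [Fin.val_zero, hz0]
  · intro t
    have := hzadm t.val (by have := t.isLt; omega)
    exact this
  · intro t
    have hmv := hzmv t.val t.isLt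
    obtain ⟨a, b, hab, h1, h2, h3, h4⟩ := hmv
    refine ⟨a, b, hab, ?_, ?_, ?_, ?_⟩ <;>
      simp only [Fin.coe_castSucc, Fin.val_succ]
    · exact h1
    · exact h2
    · exact h3
    · exact h4
  · intro i
    show zn ((Fin.last (L.length * (N - 1))) : ℕ) i = zn ((0 : Fin _) : ℕ) i + (N : ℤ) * W i
    rw [Fin.val_last, Fin.val_zero, hzT, hz0]
    simp only
    rw [hcount i, hlen]
    ring
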